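/- Let h : ℝ^ℓ → ℝ be continuous with h(p) ≥ 0 for all p, such that for every t > 0 the sublevel set {p ∈ ℝ^ℓ : h(p) < t} is nonempty and connected. Let F : ℝ^m → ℝ be continuous and let c ∈ ℝ. Set H(p,q) = h(p) + F(q) for (p,q) ∈ ℝ^ℓ × ℝ^m, and let π(p,q) = q be the projection. Then π maps the open set {(p,q) : H(p,q) < c} onto {q : F(q) < c}, and two points of {H < c} lie in the same connected component of {H < c} if and only if their projections lie in the same connected component of {F < c}; consequently π induces a bijection between the connected components of {H < c} and the connected components of {F < c}. -/
import Mathlib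

open Set

/-- A "cylinder" over a connected open set with connected nonempty fibers is preconnected. -/
lemma cylinder_preconnected {X Y : Type*} [TopologicalSpace X] [TopologicalSpace Y]
    (S : Set (X × Y)) (hS : IsOpen S) (C : Set Y) (hC : IsOpen C)
    (hCconn : IsPreconnected C)
    (hfib : ∀ q ∈ C, IsConnected {p : X | (p, q) ∈ S}) :
    IsPreconnected (S ∩ Prod.snd ⁻¹' C) := by
  set W : Set (X × Y) := S ∩ Prod.snd ⁻¹' C with hW
  have hWopen : IsOpen W := hS.inter (hC.preimage continuous_snd)
  intro u v hu hv hcov hneu hnev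
  -- fibers as subsets of the product
  set fib : Y → Set (X × Y) := fun q => {p : X | (p, q) ∈ S} ×ˢ ({q} : Set Y) with hfibdef
  have hfibW : ∀ q ∈ C, fib q ⊆ W := by
    rintro q hq ⟨p, q'⟩ ⟨hp, hq'⟩
    simp only [mem_singleton_iff] at hq'
    subst hq'
    exact ⟨hp, hq⟩
  have key : ∀ q ∈ C, (fib q ∩ u).Nonempty → (fib q ∩ v).Nonempty →
      (W ∩ (u ∩ v)).Nonempty := by
    intro q hq h1 h2
    have hconn : IsPreconnected (fib q) :=
      ((hfib q hq).prod isConnected_singleton).isPreconnected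
    have := hconn u v hu hv ((hfibW q hq).trans hcov) h1 h2
    exact this.mono (inter_subset_inter_left _ (hfibW q hq))
  by_contra hcon
  -- projections of W ∩ u and W ∩ v
  set U' : Set Y := Prod.snd '' (W ∩ u) with hU'
  set V' : Set Y := Prod.snd '' (W ∩ v) with hV'
  have hU'open : IsOpen U' := isOpenMap_snd _ (hWopen.inter hu)
  have hV'open : IsOpen V' := isOpenMap_snd _ (hWopen.inter hv)
  have hcov' : C ⊆ U' ∪ V' := by
    intro q hq
    obtain ⟨p, hp⟩ := (hfib q hq).nonempty
    have hpqW : (p, q) ∈ W := hfibW q hq ⟨hp, rfl⟩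
    rcases hcov hpqW with h | h
    · exact Or.inl ⟨(p, q), ⟨hpqW, h⟩, rfl⟩
    · exact Or.inr ⟨(p, q), ⟨hpqW, h⟩, rfl⟩
  have hCU : (C ∩ U').Nonempty := by
    obtain ⟨x, hxW, hxu⟩ := hneu
    exact ⟨x.2, hxW.2, x, ⟨hxW, hxu⟩, rfl⟩
  have hCV : (C ∩ V').Nonempty := by
    obtain ⟨x, hxW, hxv⟩ := hnev
    exact ⟨x.2, hxW.2, x, ⟨hxW, hxv⟩, rfl⟩
  obtain ⟨q, hqC, hqU, hqV⟩ := hCconn U' V' hU'open hV'open hcov' hCU hCV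
  obtain ⟨x, ⟨hxW, hxu⟩, hx2⟩ := hqU
  obtain ⟨y, ⟨hyW, hyv⟩, hy2⟩ := hqV
  have hxfib : x ∈ fib q := by
    refine ⟨?_, by simp [hx2]⟩
    show (x.1, q) ∈ S
    rw [← hx2]
    exact hxW.1
  have hyfib : y ∈ fib q := by
    refine ⟨?_, by simp [hy2]⟩
    show (y.1, q) ∈ S
    rw [← hy2]
    exact hyW.1
  exact hcon (key q hqC ⟨x, hxfib, hxu⟩ ⟨y, hyfib, hyv⟩)

section main

variable {l m : ℕ}
    (h : EuclideanSpace ℝ (Fin l) → ℝ)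
    (F : EuclideanSpace ℝ (Fin m) → ℝ) (c : ℝ)

/-- For `H(p,q) = h(p) + F(q)` with `h ≥ 0` continuous having nonempty connected
sublevel sets, the projection `π(p,q) = q` maps `{H < c}` onto `{F < c}` and
induces a bijection between the connected components of `{H < c}` and those of
`{F < c}`. -/
theorem sublevel_components_of_sum {l m : ℕ}
    (h : EuclideanSpace ℝ (Fin l) → ℝ)
    (hcont : Continuous h) (hnn : ∀ p, 0 ≤ h p)
    (hconn : ∀ t : ℝ, 0 < t → IsConnected {p : EuclideanSpace ℝ (Fin l) | h p < t})
    (F : EuclideanSpace ℝ (Fin m) → ℝ) (hF : Continuous F) (c : ℝ) :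
    Prod.snd '' {x : EuclideanSpace ℝ (Fin l) × EuclideanSpace ℝ (Fin m) |
        h x.1 + F x.2 < c} = {q : EuclideanSpace ℝ (Fin m) | F q < c} ∧
    (∀ a b : EuclideanSpace ℝ (Fin l) × EuclideanSpace ℝ (Fin m),
      a ∈ {x : EuclideanSpace ℝ (Fin l) × EuclideanSpace ℝ (Fin m) | h x.1 + F x.2 < c} →
      b ∈ {x : EuclideanSpace ℝ (Fin l) × EuclideanSpace ℝ (Fin m) | h x.1 + F x.2 < c} →
      (connectedComponentIn
          {x : EuclideanSpace ℝ (Fin l) × EuclideanSpace ℝ (Fin m) | h x.1 + F x.2 < c} a =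
        connectedComponentIn
          {x : EuclideanSpace ℝ (Fin l) × EuclideanSpace ℝ (Fin m) | h x.1 + F x.2 < c} b ↔
       connectedComponentIn {q : EuclideanSpace ℝ (Fin m) | F q < c} a.2 =
        connectedComponentIn {q : EuclideanSpace ℝ (Fin m) | F q < c} b.2)) ∧
    ∃ e : ConnectedComponents
            {x : EuclideanSpace ℝ (Fin l) × EuclideanSpace ℝ (Fin m) // h x.1 + F x.2 < c} ≃
          ConnectedComponents {q : EuclideanSpace ℝ (Fin m) // F q < c},
      ∀ (x : {x : EuclideanSpace ℝ (Fin l) × EuclideanSpace ℝ (Fin m) // h x.1 + F x.2 < c})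
        (hx : F x.1.2 < c),
        e (ConnectedComponents.mk x) = ConnectedComponents.mk ⟨x.1.2, hx⟩ := by
  set S : Set (EuclideanSpace ℝ (Fin l) × EuclideanSpace ℝ (Fin m)) :=
    {x | h x.1 + F x.2 < c} with hSdef
  set T : Set (EuclideanSpace ℝ (Fin m)) := {q | F q < c} with hTdef
  have hSopen : IsOpen S := isOpen_lt ((hcont.comp continuous_fst).add (hF.comp continuous_snd))
    continuous_const
  have hTopen : IsOpen T := isOpen_lt hF continuous_const
  have hST : ∀ x ∈ S, x.2 ∈ T := fun x hx =>
    lt_of_le_of_lt (le_add_of_nonneg_left (hnn x.1)) hx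
  have hfib : ∀ q ∈ T, IsConnected {p : EuclideanSpace ℝ (Fin l) | (p, q) ∈ S} := by
    intro q hq
    have : {p : EuclideanSpace ℝ (Fin l) | (p, q) ∈ S} =
        {p : EuclideanSpace ℝ (Fin l) | h p < c - F q} := by
      ext p
      simp [hSdef, lt_sub_iff_add_lt]
    rw [this]
    exact hconn _ (sub_pos.mpr hq)
  -- key structural lemma
  have keyB : ∀ a ∈ S,
      connectedComponentIn S a = S ∩ Prod.snd ⁻¹' (connectedComponentIn T a.2) := by
    intro a ha
    have ha2 : a.2 ∈ T := hST a ha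
    set C := connectedComponentIn T a.2 with hCdef
    have hCopen : IsOpen C := hTopen.connectedComponentIn
    have hCconn : IsConnected C := isConnected_connectedComponentIn_iff.mpr ha2
    have hCT : C ⊆ T := connectedComponentIn_subset _ _
    have hWpre : IsPreconnected (S ∩ Prod.snd ⁻¹' C) :=
      cylinder_preconnected S hSopen C hCopen hCconn.isPreconnected
        (fun q hq => hfib q (hCT hq))
    apply Subset.antisymm
    · -- component ⊆ cylinder
      intro x hx
      have hxS : x ∈ S := connectedComponentIn_subset _ _ hx
      refine ⟨hxS, ?_⟩
      have himg : Prod.snd '' connectedComponentIn S a ⊆ C := by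
        apply IsPreconnected.subset_connectedComponentIn
        · exact ((isConnected_connectedComponentIn_iff.mpr ha).image _
            continuous_snd.continuousOn).isPreconnected
        · exact ⟨a, mem_connectedComponentIn ha, rfl⟩
        · rintro q ⟨y, hy, rfl⟩
          exact hST y (connectedComponentIn_subset _ _ hy)
      exact himg ⟨x, hx, rfl⟩
    · exact hWpre.subset_connectedComponentIn ⟨ha, mem_connectedComponentIn ha2⟩
        inter_subset_left
  -- Part 2
  have part2 : ∀ a b, a ∈ S → b ∈ S →
      (connectedComponentIn S a = connectedComponentIn S b ↔
        connectedComponentIn T a.2 = connectedComponentIn T b.2) := by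
    intro a b ha hb
    constructor
    · intro hab
      have hbmem : b ∈ connectedComponentIn S a := hab ▸ mem_connectedComponentIn hb
      rw [keyB a ha] at hbmem
      exact connectedComponentIn_eq hbmem.2
    · intro hq
      rw [keyB a ha, keyB b hb, hq]
  -- Part 1
  have part1 : Prod.snd '' S = T := by
    apply Subset.antisymm
    · rintro q ⟨x, hx, rfl⟩
      exact hST x hx
    · intro q hq
      obtain ⟨p, hp⟩ := (hconn (c - F q) (sub_pos.mpr hq)).nonempty
      exact ⟨(p, q), show h p + F q < c from lt_sub_iff_add_lt.mp hp, rfl⟩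
  refine ⟨part1, part2, ?_⟩
  -- Part 3 : bijection of connected components
  -- bridge between subtype components and connectedComponentIn
  have bridgeS : ∀ x y : S, (connectedComponent x = connectedComponent y ↔
      connectedComponentIn S x.1 = connectedComponentIn S y.1) := by
    intro x y
    rw [connectedComponentIn_eq_image x.2, connectedComponentIn_eq_image y.2]
    constructor
    · intro hxy; rw [Subtype.coe_eta, Subtype.coe_eta, hxy]
    · intro hxy
      have := Set.image_injective.mpr Subtype.val_injective hxy
      rwa [Subtype.coe_eta, Subtype.coe_eta] at this
  have bridgeT : ∀ x y : T, (connectedComponent x = connectedComponent y ↔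
      connectedComponentIn T x.1 = connectedComponentIn T y.1) := by
    intro x y
    rw [connectedComponentIn_eq_image x.2, connectedComponentIn_eq_image y.2]
    constructor
    · intro hxy; rw [Subtype.coe_eta, Subtype.coe_eta, hxy]
    · intro hxy
      have := Set.image_injective.mpr Subtype.val_injective hxy
      rwa [Subtype.coe_eta, Subtype.coe_eta] at this
  -- projection map on subtypes
  let π : S → T := fun x => ⟨x.1.2, hST x.1 x.2⟩
  -- section: pick a point in the fiber
  let sec : T → S := fun q =>
    ⟨((hconn (c - F q.1) (sub_pos.mpr q.2)).nonempty.some, q.1),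
      show h _ + F _ < c from
        lt_sub_iff_add_lt.mp (hconn (c - F q.1) (sub_pos.mpr q.2)).nonempty.some_mem⟩
  have hsec2 : ∀ q : T, (sec q).1.2 = q.1 := fun q => rfl
  -- same-component correspondence on subtypes
  have subcorr : ∀ x y : S,
      connectedComponent x = connectedComponent y ↔
      connectedComponent (π x) = connectedComponent (π y) := by
    intro x y
    rw [bridgeS, bridgeT]
    exact part2 x.1 y.1 x.2 y.2
  have toFun_wd : ∀ x y : S, connectedComponent x = connectedComponent y →
      ConnectedComponents.mk (π x) = ConnectedComponents.mk (π y) := by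
    intro x y h1
    exact ConnectedComponents.coe_eq_coe.mpr ((subcorr x y).mp h1)
  have invFun_wd : ∀ x y : T, connectedComponent x = connectedComponent y →
      ConnectedComponents.mk (sec x) = ConnectedComponents.mk (sec y) := by
    intro x y h1
    refine ConnectedComponents.coe_eq_coe.mpr ?_
    rw [bridgeS]
    have hTT := (bridgeT x y).mp h1
    rw [keyB _ (sec x).2, keyB _ (sec y).2]
    show S ∩ Prod.snd ⁻¹' connectedComponentIn T x.1 =
      S ∩ Prod.snd ⁻¹' connectedComponentIn T y.1
    rw [hTT]
  refine ⟨⟨Quotient.lift (fun x : S => ConnectedComponents.mk (π x))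
        (fun x y hxy => toFun_wd x y hxy),
      Quotient.lift (fun q : T => ConnectedComponents.mk (sec q))
        (fun x y hxy => invFun_wd x y hxy), ?_, ?_⟩, ?_⟩
  · -- left inverse
    refine Quotient.ind (fun x => ?_)
    show ConnectedComponents.mk (sec (π x)) = ConnectedComponents.mk x
    refine ConnectedComponents.coe_eq_coe.mpr ?_
    rw [bridgeS]
    rw [keyB _ (sec (π x)).2, keyB _ x.2]
  · -- right inverse
    refine Quotient.ind (fun q => ?_)
    show ConnectedComponents.mk (π (sec q)) = ConnectedComponents.mk q
    rfl
  · intro x hx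
    show ConnectedComponents.mk (π x) = ConnectedComponents.mk ⟨x.1.2, hx⟩
    rfl

end main
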